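/- Worpitzky's identity: for every k \ge 0, \sum_{m \ge 1} m^k x^{m-1} = A_k(x)/(1-x)^{k+1} as an identity of formal power series (with A_0(x) = 1), where A_k(x) is the Eulerian polynomial counting permutations of S_k by descents. -/
import Mathlib


open Polynomial Finset

/-- The value `w(i)` of a permutation of `{0,…,n-1}` at position `i` (0-based),
padded by `n` outside the range. -/
def permVal {n : ℕ} (w : Equiv.Perm (Fin n)) (i : ℕ) : ℕ :=
  if h : i < n then (w ⟨i, h⟩ : ℕ) else n

/-- The number of descents of a permutation. -/
def des {n : ℕ} (w : Equiv.Perm (Fin n)) : ℕ :=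
  ((Finset.range (n - 1)).filter fun i => permVal w (i + 1) < permVal w i).card

/-- The Eulerian polynomial `A_n(x) = ∑_{w ∈ S_n} x^{des(w)}`. -/
noncomputable def eulerian (n : ℕ) : Polynomial ℝ :=
  ∑ w : Equiv.Perm (Fin n), Polynomial.X ^ des w

/-- Insert the value `k` at position `p` into the word of `w`. -/
def ins {k : ℕ} (w : Equiv.Perm (Fin k)) (p : Fin (k + 1)) : Equiv.Perm (Fin (k + 1)) :=
  (finSuccEquiv' p).trans ((Equiv.optionCongr w).trans (finSuccEquiv' (Fin.last k)).symm)

lemma ins_apply_self {k : ℕ} (w : Equiv.Perm (Fin k)) (p : Fin (k + 1)) :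
    ins w p p = Fin.last k := by
  simp [ins, finSuccEquiv'_at, finSuccEquiv'_symm_none]

lemma ins_apply_succAbove {k : ℕ} (w : Equiv.Perm (Fin k)) (p : Fin (k + 1)) (j : Fin k) :
    ins w p (p.succAbove j) = (w j).castSucc := by
  simp [ins, finSuccEquiv'_succAbove, finSuccEquiv'_symm_some, Fin.succAbove_last]

lemma permVal_lt {k : ℕ} (w : Equiv.Perm (Fin k)) {i : ℕ} (h : i < k) : permVal w i < k := by
  simp only [permVal, dif_pos h]
  exact (w ⟨i, h⟩).isLt

lemma permVal_ins {k : ℕ} (w : Equiv.Perm (Fin k)) (p : Fin (k + 1)) (i : ℕ) :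
    permVal (ins w p) i =
      if i < p.val then permVal w i
      else if i = p.val then k
      else if i < k + 1 then permVal w (i - 1) else k + 1 := by
  have hp : p.val ≤ k := Nat.lt_succ_iff.mp p.isLt
  rcases lt_trichotomy i p.val with h | h | h
  · have hik : i < k := lt_of_lt_of_le h hp
    have hik1 : i < k + 1 := Nat.lt_succ_of_lt hik
    rw [if_pos h]
    have : (⟨i, hik1⟩ : Fin (k + 1)) = p.succAbove ⟨i, hik⟩ := by
      rw [Fin.succAbove_of_castSucc_lt]
      · rfl
      · exact h
    simp only [permVal, dif_pos hik1, dif_pos hik, this, ins_apply_succAbove]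
    rfl
  · rw [if_neg (by omega), if_pos h]
    have hik1 : i < k + 1 := by omega
    simp only [permVal, dif_pos hik1]
    rw [show (⟨i, hik1⟩ : Fin (k + 1)) = p from Fin.ext h, ins_apply_self]
    rfl
  · rw [if_neg (by omega), if_neg (by omega)]
    by_cases hik1 : i < k + 1
    · rw [if_pos hik1]
      have hi1k : i - 1 < k := by omega
      have : (⟨i, hik1⟩ : Fin (k + 1)) = p.succAbove ⟨i - 1, hi1k⟩ := by
        rw [Fin.succAbove_of_le_castSucc]
        · ext; simp; omega
        · simp [Fin.le_def]; omega
      simp only [permVal, dif_pos hik1, dif_pos hi1k, this, ins_apply_succAbove]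
      rfl
    · rw [if_neg hik1]
      simp [permVal, hik1]

lemma des_ins {k : ℕ} (w : Equiv.Perm (Fin k)) (p : Fin (k + 1)) :
    des (ins w p) =
      if p.val = k ∨ (0 < p.val ∧ permVal w p.val < permVal w (p.val - 1)) then des w
      else des w + 1 := by
  have hp : p.val ≤ k := Nat.lt_succ_iff.mp p.isLt
  set D := (Finset.range (k - 1)).filter (fun i => permVal w (i + 1) < permVal w i) with hD
  set ψ : ℕ → ℕ := fun i => if i < p.val then i else i + 1 with hψ
  have hset : (Finset.range ((k + 1) - 1)).filter
      (fun i => permVal (ins w p) (i + 1) < permVal (ins w p) i) =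
      ((D.filter (fun i => i + 1 ≠ p.val)).image ψ) ∪
        ((Finset.range k).filter (fun i => i = p.val)) := by
    ext i
    simp only [Finset.mem_filter, Finset.mem_union, Finset.mem_image, Finset.mem_range,
      Nat.add_sub_cancel, hD, hψ]
    constructor
    · rintro ⟨hik, hdesc⟩
      rw [permVal_ins, permVal_ins] at hdesc
      rcases lt_trichotomy (i + 1) p.val with h1 | h1 | h1
      · left
        refine ⟨i, ⟨⟨by omega, ?_⟩, by omega⟩, by simp [show i < p.val by omega]⟩
        simpa [h1, show i < p.val by omega] using hdesc
      · exfalso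
        rw [if_neg (by omega), if_pos h1, if_pos (by omega)] at hdesc
        exact absurd hdesc (not_lt.mpr (permVal_lt w (by omega)).le)
      · rcases lt_trichotomy i p.val with h2 | h2 | h2
        · omega
        · right; exact ⟨hik, h2⟩
        · left
          refine ⟨i - 1, ⟨⟨by omega, ?_⟩, by omega⟩, by simp [show ¬ (i - 1 < p.val) by omega]; omega⟩
          rw [if_neg (by omega), if_neg (by omega), if_pos (by omega),
            if_neg (by omega), if_neg (by omega), if_pos (by omega)] at hdesc
          have : i - 1 + 1 = i := by omega
          rw [this]
          simpa using hdesc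
    · rintro (⟨a, ⟨⟨hak, hadesc⟩, hap⟩, hai⟩ | ⟨hik, hip⟩)
      · by_cases hcase : a < p.val
        · have hi : i = a := by simp [hcase] at hai; omega
          subst hi
          refine ⟨by omega, ?_⟩
          rw [permVal_ins, permVal_ins, if_pos (by omega), if_pos hcase]
          exact hadesc
        · have hi : i = a + 1 := by simp [hcase] at hai; omega
          subst hi
          refine ⟨by omega, ?_⟩
          rw [permVal_ins, permVal_ins, if_neg (by omega), if_neg (by omega),
            if_pos (by omega), if_neg (by omega), if_neg (by omega), if_pos (by omega)]
          simpa using hadesc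
      · subst hip
        refine ⟨hik, ?_⟩
        rw [permVal_ins, permVal_ins, if_neg (by omega), if_neg (by omega),
          if_pos (by omega), if_neg (by omega), if_pos rfl]
        simp only [Nat.add_sub_cancel]
        exact permVal_lt w hik
  have hdes : des w = D.card := rfl
  rw [des, hset, Finset.card_union_of_disjoint, Finset.card_image_of_injOn]
  · -- now compute the two cards
    have hcard2 : ((Finset.range k).filter (fun i => i = p.val)).card =
        if p.val < k then 1 else 0 := by
      split_ifs with h
      · rw [Finset.filter_eq', if_pos (Finset.mem_range.mpr h), Finset.card_singleton]
      · rw [Finset.filter_eq', if_neg (by simp [Finset.mem_range]; omega), Finset.card_empty]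
    rw [hcard2]
    by_cases hpk : p.val = k
    · have : D.filter (fun i => i + 1 ≠ p.val) = D := by
        apply Finset.filter_true_of_mem
        intro a ha
        simp only [hD, Finset.mem_filter, Finset.mem_range] at ha
        omega
      rw [this, if_neg (by omega), if_pos (Or.inl hpk), add_zero]
      exact hdes.symm
    · rw [if_pos (by omega)]
      by_cases hdesc : 0 < p.val ∧ permVal w p.val < permVal w (p.val - 1)
      · rw [if_pos (Or.inr hdesc)]
        have hmem : p.val - 1 ∈ D := by
          simp only [hD, Finset.mem_filter, Finset.mem_range]
          constructor
          · omega
          · rw [show p.val - 1 + 1 = p.val by omega]; exact hdesc.2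
        have : D = insert (p.val - 1) (D.filter (fun i => i + 1 ≠ p.val)) := by
          ext a
          simp only [Finset.mem_insert, Finset.mem_filter]
          constructor
          · intro ha
            by_cases h : a + 1 = p.val
            · left; omega
            · right; exact ⟨ha, h⟩
          · rintro (h | h)
            · subst h; exact hmem
            · exact h.1
        have hni : p.val - 1 ∉ D.filter (fun i => i + 1 ≠ p.val) := by
          simp only [Finset.mem_filter]
          rintro ⟨-, h⟩
          omega
        have hcard := Finset.card_insert_of_notMem hni
        rw [← this] at hcard
        omega
      · rw [if_neg (by tauto)]
        have : D.filter (fun i => i + 1 ≠ p.val) = D := by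
          apply Finset.filter_true_of_mem
          intro a ha
          intro h
          apply hdesc
          constructor
          · omega
          · simp only [hD, Finset.mem_filter] at ha
            rw [show p.val - 1 = a by omega, ← h]
            exact ha.2
        rw [this]
        omega
  · -- injective
    intro a ha b hb hab
    simp only [hψ] at hab
    split_ifs at hab <;> omega
  · -- disjoint
    rw [Finset.disjoint_left]
    rintro x hx hx2
    simp only [Finset.mem_image, hψ] at hx
    simp only [Finset.mem_filter] at hx2
    obtain ⟨a, ha, hax⟩ := hx
    split_ifs at hax <;> omega

lemma des_le {k : ℕ} (w : Equiv.Perm (Fin k)) : des w ≤ k - 1 :=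
  le_trans (Finset.card_filter_le _ _) (by rw [Finset.card_range])

lemma ins_bijective (k : ℕ) :
    Function.Bijective (fun wp : Equiv.Perm (Fin k) × Fin (k + 1) => ins wp.1 wp.2) := by
  rw [Fintype.bijective_iff_injective_and_card]
  constructor
  · rintro ⟨w, p⟩ ⟨w', p'⟩ h
    simp only at h
    have hp : p = p' := by
      by_contra hne
      obtain ⟨j, hj⟩ := Fin.exists_succAbove_eq hne
      have h1 : ins w p p = Fin.last k := ins_apply_self w p
      have h2 : ins w' p' p = (w' j).castSucc := by
        rw [← hj]; exact ins_apply_succAbove w' p' j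
      rw [h, h2] at h1
      exact absurd h1 (Fin.castSucc_lt_last _).ne
    subst hp
    have hw : w = w' := by
      ext j
      have := congrArg (fun e => (e : Equiv.Perm (Fin (k+1))) (p.succAbove j)) h
      simp only [ins_apply_succAbove] at this
      exact congrArg Fin.val (Fin.castSucc_injective _ this)
    rw [hw]
  · simp [Fintype.card_perm, Fintype.card_prod, Fintype.card_fin, Nat.factorial_succ, mul_comm]

lemma card_Q {k : ℕ} (w : Equiv.Perm (Fin k)) :
    (Finset.univ.filter fun p : Fin (k + 1) =>
        p.val = k ∨ (0 < p.val ∧ permVal w p.val < permVal w (p.val - 1))).card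
      = des w + 1 := by
  set D := (Finset.range (k - 1)).filter (fun i => permVal w (i + 1) < permVal w i) with hD
  have hdes : des w = D.card := rfl
  have himk : ∀ a ∈ D, a + 1 < k := by
    intro a ha
    simp only [hD, Finset.mem_filter, Finset.mem_range] at ha
    omega
  have hS : (Finset.univ.filter fun p : Fin (k + 1) =>
      p.val = k ∨ (0 < p.val ∧ permVal w p.val < permVal w (p.val - 1))).card
      = (insert k (D.image (· + 1))).card := by
    apply Finset.card_bij (fun p _ => p.val)
    · intro p hp
      simp only [Finset.mem_filter, Finset.mem_univ, true_and] at hp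
      rcases hp with h | ⟨h0, hd⟩
      · rw [h]; exact Finset.mem_insert_self k _
      · by_cases hpk : p.val = k
        · rw [hpk]; exact Finset.mem_insert_self k _
        · apply Finset.mem_insert_of_mem
          simp only [Finset.mem_image]
          refine ⟨p.val - 1, ?_, by omega⟩
          simp only [hD, Finset.mem_filter, Finset.mem_range]
          have : p.val ≤ k := Nat.lt_succ_iff.mp p.isLt
          constructor
          · omega
          · rw [show p.val - 1 + 1 = p.val by omega]; exact hd
    · intro a _ b _ hab
      exact Fin.ext hab
    · intro a ha
      simp only [Finset.mem_insert, Finset.mem_image] at ha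
      have hak : a < k + 1 := by
        rcases ha with h | ⟨b, hb, hba⟩
        · omega
        · have := himk b hb; omega
      refine ⟨⟨a, hak⟩, ?_, rfl⟩
      simp only [Finset.mem_filter, Finset.mem_univ, true_and]
      rcases ha with h | ⟨b, hb, hba⟩
      · left; exact h
      · right
        simp only [hD, Finset.mem_filter, Finset.mem_range] at hb
        refine ⟨by omega, ?_⟩
        show permVal w a < permVal w (a - 1)
        rw [show a - 1 = b by omega, show a = b + 1 by omega]
        exact hb.2
  rw [hS, Finset.card_insert_of_notMem, Finset.card_image_of_injective _ (add_left_injective 1),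
    hdes, add_comm]
  simp only [Finset.mem_image]
  rintro ⟨a, ha, hak⟩
  have := himk a ha
  omega

lemma sum_ins {k : ℕ} (w : Equiv.Perm (Fin k)) :
    ∑ p : Fin (k + 1), (Polynomial.X : ℝ[X]) ^ des (ins w p) =
      (des w + 1) • (Polynomial.X : ℝ[X]) ^ des w +
        (k - des w) • (Polynomial.X : ℝ[X]) ^ (des w + 1) := by
  simp_rw [des_ins, apply_ite (fun n => (Polynomial.X : ℝ[X]) ^ n)]
  rw [Finset.sum_ite, Finset.sum_const, Finset.sum_const, card_Q]
  congr 1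
  have htot := Finset.card_filter_add_card_filter_not (s := (Finset.univ : Finset (Fin (k+1))))
    (p := fun p : Fin (k + 1) =>
      p.val = k ∨ (0 < p.val ∧ permVal w p.val < permVal w (p.val - 1)))
  rw [card_Q] at htot
  simp only [Finset.card_univ, Fintype.card_fin] at htot
  have hd := des_le w
  congr 1
  omega

lemma X_mul_derivative_X_pow (d : ℕ) :
    (Polynomial.X : ℝ[X]) * Polynomial.derivative (Polynomial.X ^ d) = d • Polynomial.X ^ d := by
  cases d with
  | zero => simp
  | succ n =>
    rw [Polynomial.derivative_X_pow, nsmul_eq_mul, Polynomial.C_eq_natCast]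
    push_cast
    ring

lemma eulerian_succ (k : ℕ) :
    eulerian (k + 1) = ∑ w : Equiv.Perm (Fin k),
      ((des w + 1) • (Polynomial.X : ℝ[X]) ^ des w +
        (k - des w) • (Polynomial.X : ℝ[X]) ^ (des w + 1)) := by
  rw [eulerian]
  rw [← Fintype.sum_bijective _ (ins_bijective k)
    (fun wp : Equiv.Perm (Fin k) × Fin (k + 1) => (Polynomial.X : ℝ[X]) ^ des (ins wp.1 wp.2))
    _ (fun wp => rfl)]
  rw [Fintype.sum_prod_type]
  exact Finset.sum_congr rfl fun w _ => sum_ins w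

lemma eulerian_rec (k : ℕ) :
    eulerian (k + 1) = (1 + (k : ℝ[X]) * Polynomial.X) * eulerian k +
      Polynomial.X * (1 - Polynomial.X) * Polynomial.derivative (eulerian k) := by
  rw [eulerian_succ]
  simp only [eulerian]
  rw [map_sum, Finset.mul_sum, Finset.mul_sum,
    ← Finset.sum_add_distrib]
  refine Finset.sum_congr rfl fun w _ => ?_
  have hd : des w ≤ k := le_trans (des_le w) (Nat.sub_le k 1)
  have h1 : Polynomial.X * (1 - Polynomial.X) * Polynomial.derivative ((Polynomial.X : ℝ[X]) ^ des w)
      = (1 - Polynomial.X) * (des w • Polynomial.X ^ des w) := by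
    rw [mul_comm Polynomial.X (1 - Polynomial.X), mul_assoc, X_mul_derivative_X_pow]
  rw [h1, nsmul_eq_mul, nsmul_eq_mul, nsmul_eq_mul, Nat.cast_sub hd]
  push_cast
  ring

lemma poly_coe_natCast (n : ℕ) : ((n : ℝ[X]) : PowerSeries ℝ) = (n : PowerSeries ℝ) := by
  rw [← Polynomial.C_eq_natCast, Polynomial.coe_C, map_natCast]

lemma eulerian_zero : eulerian 0 = 1 := by
  rw [eulerian]
  simp [des]


/-- Worpitzky's identity: as formal power series,
`∑_{m ≥ 1} m^k x^{m-1} = A_k(x)/(1-x)^{k+1}`, i.e. the series with coefficient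
`(j+1)^k` of `x^j`, multiplied by `(1-x)^{k+1}`, equals the Eulerian polynomial. -/
theorem worpitzky (k : ℕ) :
    (PowerSeries.mk fun j : ℕ => (((j + 1) ^ k : ℕ) : ℝ)) *
      (1 - PowerSeries.X) ^ (k + 1) = (eulerian k : PowerSeries ℝ) := by
  induction k with
  | zero =>
    rw [eulerian_zero, Polynomial.coe_one, pow_one, mul_sub, mul_one]
    ext n
    rw [map_sub]
    cases n with
    | zero => simp
    | succ m =>
      rw [mul_comm, PowerSeries.coeff_succ_X_mul]
      simp [PowerSeries.coeff_one]
  | succ k ih =>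
    set F : PowerSeries ℝ := PowerSeries.mk fun j : ℕ => (((j + 1) ^ k : ℕ) : ℝ) with hF
    have hder : (PowerSeries.mk fun j : ℕ => (((j + 1) ^ (k + 1) : ℕ) : ℝ)) =
        PowerSeries.derivative ℝ (PowerSeries.X * F) := by
      ext n
      rw [PowerSeries.coeff_derivative, PowerSeries.coeff_succ_X_mul, hF,
        PowerSeries.coeff_mk, PowerSeries.coeff_mk]
      push_cast
      ring
    have hXF : PowerSeries.derivative ℝ (PowerSeries.X * F) =
        F + PowerSeries.X * PowerSeries.derivative ℝ F := by
      rw [Derivation.leibniz, PowerSeries.derivative_X, smul_eq_mul, smul_eq_mul, mul_one]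
      ring
    have hpow : PowerSeries.derivative ℝ ((1 - PowerSeries.X) ^ (k + 1)) =
        -(((k : PowerSeries ℝ) + 1) * (1 - PowerSeries.X) ^ k) := by
      rw [Derivation.leibniz_pow, map_sub, PowerSeries.derivative_X,
        Derivation.map_one_eq_zero, zero_sub, Nat.add_sub_cancel, smul_eq_mul, nsmul_eq_mul]
      push_cast
      ring
    rw [hder, hXF, eulerian_rec k]
    simp only [Polynomial.coe_add, Polynomial.coe_mul, Polynomial.coe_one, Polynomial.coe_X,
      poly_coe_natCast, ← PowerSeries.derivative_coe, ← ih]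
    rw [Derivation.leibniz, hpow, smul_eq_mul, smul_eq_mul]
    push_cast
    ring
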